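/- Let n be a positive integer and m an integer with m ∉ nℤ, and let p, q be coprime integers with p > 0 and q/p = m/n (so p ≥ 2 and q ≠ 0). Then for every θ ∈ ℝ and every k ≥ 1, the k-fold forward image set r^k((d^k)^{-1}(e^{2πiθ})) equals { e^{2πi(θq^k + j)/p^k} : j = 0, 1, …, p^k − 1 }, where d(z) = z^n and r(z) = z^m on the circle 𝕋. -/

import Mathlib

open Real


lemma my_exp_pow (x : ℝ) (k : ℕ) : (Circle.exp x) ^ k = Circle.exp (k * x) := by
  induction k with
  | zero => simp
  | succ k ih =>
    rw [pow_succ, ih, ← Circle.exp_add]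
    congr 1; push_cast; ring

lemma my_exp_zpow (x : ℝ) (m : ℤ) : (Circle.exp x) ^ m = Circle.exp (m * x) := by
  have hinv : ∀ y : ℝ, (Circle.exp y)⁻¹ = Circle.exp (-y) := by
    intro y
    rw [eq_comm, eq_inv_iff_mul_eq_one, ← Circle.exp_add, neg_add_cancel, Circle.exp_zero]
  cases m with
  | ofNat k => simpa using my_exp_pow x k
  | negSucc k =>
    rw [zpow_negSucc, my_exp_pow, hinv]
    congr 1; push_cast; ring

lemma my_step (n : ℕ) (hn : 0 < n) (m : ℤ) (p q : ℤ) (hp : 0 < p)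
    (hpq : IsCoprime p q) (hred : q * n = m * p) (φ : ℝ) :
    (fun z : Circle => z ^ m) '' ((fun z : Circle => z ^ n) ⁻¹' {Circle.exp (2 * π * φ)}) =
      {w : Circle | ∃ j : ℤ, w = Circle.exp (2 * π * (φ * q + j) / p)} := by
  have hn0 : (n : ℝ) ≠ 0 := Nat.cast_ne_zero.mpr hn.ne'
  have hp0 : (p : ℝ) ≠ 0 := Int.cast_ne_zero.mpr hp.ne'
  have hredR : (q : ℝ) * n = m * p := by exact_mod_cast hred
  ext w
  simp only [Set.mem_image, Set.mem_preimage, Set.mem_singleton_iff, Set.mem_setOf_eq]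
  constructor
  · rintro ⟨z, hz, rfl⟩
    obtain ⟨ψ, rfl⟩ : ∃ ψ : ℝ, Circle.exp ψ = z := ⟨Complex.arg (z : ℂ), Circle.exp_arg z⟩
    rw [my_exp_pow] at hz
    obtain ⟨c, hc⟩ := Circle.exp_eq_exp.mp hz
    refine ⟨q * c, ?_⟩
    rw [my_exp_zpow]
    have hψ : (n : ℝ) * ψ = 2 * π * φ + c * (2 * π) := hc
    congr 1
    rw [eq_div_iff hp0]
    push_cast
    linear_combination (q:ℝ)*hψ - ψ*hredR
  · rintro ⟨j, rfl⟩
    obtain ⟨a, b, hab⟩ := hpq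
    have habR : (a : ℝ) * p + b * q = 1 := by exact_mod_cast hab
    refine ⟨Circle.exp (2 * π * (φ + (b * j)) / n), ?_, ?_⟩
    · rw [my_exp_pow]
      apply Circle.exp_eq_exp.mpr
      exact ⟨b * j, by push_cast; field_simp⟩
    · rw [my_exp_zpow]
      apply Circle.exp_eq_exp.mpr
      refine ⟨-(a * j), ?_⟩
      push_cast
      field_simp
      linear_combination (-(φ + (b:ℝ)*j))*hredR + ((j:ℝ)*n)*habR

lemma my_unres (P : ℤ) (hP : 0 < P) (a : ℝ) :
    {w : Circle | ∃ j : ℤ, 0 ≤ j ∧ j < P ∧ w = Circle.exp (2 * π * (a + j) / P)} =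
      {w : Circle | ∃ j : ℤ, w = Circle.exp (2 * π * (a + j) / P)} := by
  have hP0 : (P : ℝ) ≠ 0 := Int.cast_ne_zero.mpr hP.ne'
  ext w
  simp only [Set.mem_setOf_eq]
  constructor
  · rintro ⟨j, _, _, rfl⟩; exact ⟨j, rfl⟩
  · rintro ⟨j, rfl⟩
    refine ⟨j % P, Int.emod_nonneg j hP.ne', Int.emod_lt_of_pos j hP, ?_⟩
    apply Circle.exp_eq_exp.mpr
    refine ⟨j / P, ?_⟩
    have hc : ((j % P : ℤ) : ℝ) = (j : ℝ) - (P : ℝ) * ((j / P : ℤ) : ℝ) := by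
      have h2 : ((j % P : ℤ) : ℝ) + (P : ℝ) * ((j / P : ℤ) : ℝ) = (j : ℝ) := by
        exact_mod_cast Int.emod_add_mul_ediv j P
      linarith
    have e1 : (P:ℝ)*(P:ℝ)⁻¹ = 1 := mul_inv_cancel₀ hP0
    linear_combination (-(2*π/(P:ℝ))) * hc + (2*π*((j/P : ℤ):ℝ)) * e1

/-- For `n ≥ 1`, `m ∉ nℤ`, and `p, q` coprime with `p > 0` and `q/p = m/n`,
the `k`-fold forward image set `r^k((d^k)⁻¹(e^{2πiθ}))`, obtained by iterating
the set-valued map `S ↦ r(d⁻¹(S))` (with `d(z) = z^n`, `r(z) = z^m`) `k` times,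
equals `{ e^{2πi(θq^k + j)/p^k} : j = 0, 1, …, p^k − 1 }`. -/
theorem stmt1 (n : ℕ) (hn : 0 < n) (m : ℤ) (hm : ¬ (n : ℤ) ∣ m)
    (p q : ℤ) (hp : 0 < p) (hpq : IsCoprime p q) (hred : q * n = m * p) (θ : ℝ)
    (k : ℕ) (hk : 1 ≤ k) :
    (fun S : Set Circle =>
        (fun z : Circle => z ^ m) '' ((fun z : Circle => z ^ n) ⁻¹' S))^[k]
        {Circle.exp (2 * π * θ)} =
      {w : Circle | ∃ j : ℤ, 0 ≤ j ∧ j < p ^ k ∧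
        w = Circle.exp (2 * π * (θ * q ^ k + j) / p ^ k)} := by
  have hp0 : (p : ℝ) ≠ 0 := Int.cast_ne_zero.mpr hp.ne'
  have key : ∀ k : ℕ, 1 ≤ k →
      (fun S : Set Circle =>
        (fun z : Circle => z ^ m) '' ((fun z : Circle => z ^ n) ⁻¹' S))^[k]
        {Circle.exp (2 * π * θ)} =
      {w : Circle | ∃ j : ℤ, w = Circle.exp (2 * π * (θ * (q:ℝ) ^ k + j) / (p:ℝ) ^ k)} := by
    intro k hk
    induction k, hk using Nat.le_induction with
    | base =>
      rw [Function.iterate_one]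
      rw [my_step n hn m p q hp hpq hred θ]
      simp only [pow_one]
    | succ k hk IH =>
      rw [Function.iterate_succ_apply', IH]
      have hU : {w : Circle | ∃ j : ℤ, w = Circle.exp (2 * π * (θ * (q:ℝ) ^ k + j) / (p:ℝ) ^ k)} =
          ⋃ j : ℤ, {Circle.exp (2 * π * ((θ * (q:ℝ) ^ k + j) / (p:ℝ) ^ k))} := by
        ext w; simp [mul_div_assoc, eq_comm]
      rw [hU]
      simp only [Set.preimage_iUnion, Set.image_iUnion]
      have hS : ∀ j : ℤ, (fun z : Circle => z ^ m) ''
          ((fun z : Circle => z ^ n) ⁻¹' {Circle.exp (2 * π * ((θ * (q:ℝ) ^ k + j) / (p:ℝ) ^ k))}) =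
          {w : Circle | ∃ j' : ℤ, w = Circle.exp (2 * π * (((θ * (q:ℝ) ^ k + j) / (p:ℝ) ^ k) * q + j') / p)} :=
        fun j => my_step n hn m p q hp hpq hred _
      simp only [hS]
      ext w
      simp only [Set.mem_iUnion, Set.mem_setOf_eq]
      have hpk0 : ((p:ℝ)) ^ k ≠ 0 := pow_ne_zero k hp0
      constructor
      · rintro ⟨j, j', rfl⟩
        refine ⟨j * q + j' * p ^ k, ?_⟩
        congr 1
        push_cast
        field_simp
        ring
      · rintro ⟨J, rfl⟩
        obtain ⟨a, b, hab⟩ := (hpq.pow_left : IsCoprime (p^k) q)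
        have habR : (a:ℝ) * (p:ℝ)^k + b * q = 1 := by exact_mod_cast hab
        refine ⟨b * J, a * J, ?_⟩
        congr 1
        push_cast
        field_simp
        linear_combination (-((J:ℝ)*(p:ℝ)^k*p)) * habR
  rw [key k hk]
  have h2 := my_unres (p^k) (pow_pos hp k) (θ * (q:ℝ)^k)
  simp only [Int.cast_pow] at h2 ⊢
  exact h2.symm
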